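/- For every positive integer n, every real number β, and every real number ω with 0 < ω < 1/√n, there exist integers r, d, s such that 1 ≤ r ≤ 1/(√n·ω), |s + 2nβd + nβ²r| < √n·ω, and 0 ≤ nd² − sr ≤ n. -/

import Mathlib

open MeasureTheory Module Submodule Set
open scoped ENNReal

lemma stmt0_aux (n : ℕ) (β c x T Y M : ℝ) (R : ℤ)
    (hn' : (0:ℝ) < n) (hc : 0 < c) (hx0 : 0 < x) (hxc : x * c = 1)
    (hRx : (R:ℝ) ≤ x) (hTR : T < (R:ℝ) + 1) (hY0 : 0 < Y) (hY1 : Y < 1)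
    (hMc : M < c) (hxM : x * M < 1)
    (r d s : ℤ) (hr : 0 < r) (hrT : (r:ℝ) ≤ T) (hy : |β * r + d| ≤ Y)
    (hl : |(n:ℝ) * β ^ 2 * r + 2 * n * β * d + s| ≤ M) :
    1 ≤ r ∧ (r : ℝ) ≤ x ∧
      |(s : ℝ) + 2 * n * β * d + n * β ^ 2 * r| < c ∧
      0 ≤ (n : ℤ) * d ^ 2 - s * r ∧ (n : ℤ) * d ^ 2 - s * r ≤ n := by
  have hrR : (r:ℤ) ≤ R := by
    have h1 : (r:ℝ) < (R:ℝ) + 1 := lt_of_le_of_lt hrT hTR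
    have h2 : r < R + 1 := by exact_mod_cast h1
    omega
  have hrx : (r:ℝ) ≤ x := le_trans (by exact_mod_cast hrR) hRx
  have hr0 : (0:ℝ) < r := by exact_mod_cast hr
  have habs : |(s : ℝ) + 2 * n * β * d + n * β ^ 2 * r| < c := by
    have e : ((s:ℝ) + 2 * n * β * d + n * β ^ 2 * r)
        = (n:ℝ) * β ^ 2 * r + 2 * n * β * d + s := by ring
    rw [e]; exact lt_of_le_of_lt hl hMc
  have hq : (((n : ℤ) * d ^ 2 - s * r : ℤ) : ℝ)
      = (n:ℝ) * (β * r + d) ^ 2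
        - r * ((n:ℝ) * β ^ 2 * r + 2 * n * β * d + s) := by
    push_cast; ring
  have hy' := abs_le.1 hy
  have hy2 : (β * r + d) ^ 2 ≤ Y ^ 2 := sq_le_sq' hy'.1 hy'.2
  have hY2 : Y ^ 2 < 1 := by
    have h := mul_lt_mul_of_pos_left hY1 hY0
    rw [sq]; linarith
  have hyn : (n:ℝ) * (β * r + d) ^ 2 < n := by
    calc (n:ℝ) * (β * r + d) ^ 2 ≤ (n:ℝ) * Y ^ 2 :=
          mul_le_mul_of_nonneg_left hy2 hn'.le
    _ < (n:ℝ) * 1 := mul_lt_mul_of_pos_left hY2 hn'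
    _ = n := by ring
  have hyn0 : 0 ≤ (n:ℝ) * (β * r + d) ^ 2 := by positivity
  have hrl : |(r:ℝ) * ((n:ℝ) * β ^ 2 * r + 2 * n * β * d + s)| < 1 := by
    rw [abs_mul]
    calc |(r:ℝ)| * |(n:ℝ) * β ^ 2 * r + 2 * n * β * d + s|
        ≤ x * M := by
          apply mul_le_mul _ hl (abs_nonneg _) (le_of_lt hx0)
          rw [abs_of_pos hr0]; exact hrx
    _ < 1 := hxM
  have hrl' := abs_lt.1 hrl
  have hlow : (-1:ℝ) < (((n : ℤ) * d ^ 2 - s * r : ℤ) : ℝ) := by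
    rw [hq]; linarith [hrl'.1, hrl'.2]
  have hhigh : (((n : ℤ) * d ^ 2 - s * r : ℤ) : ℝ) < (n:ℝ) + 1 := by
    rw [hq]; linarith [hrl'.1, hrl'.2]
  have hlowz : (-1:ℤ) < (n : ℤ) * d ^ 2 - s * r := by exact_mod_cast hlow
  have hhighz : (n : ℤ) * d ^ 2 - s * r < (n:ℤ) + 1 := by
    have : ((n:ℝ) + 1) = (((n:ℤ) + 1 : ℤ) : ℝ) := by push_cast; ring
    rw [this] at hhigh
    exact_mod_cast hhigh
  exact ⟨hr, hrx, habs, by omega, by omega⟩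

set_option maxHeartbeats 1000000 in
/-- Lemma 4.5: for every positive integer `n`, real `β`, and `0 < ω < 1/√n`,
there exist integers `r, d, s` with `1 ≤ r ≤ 1/(√n·ω)`,
`|s + 2nβd + nβ²r| < √n·ω`, and `0 ≤ nd² − sr ≤ n`. -/
theorem stmt_0 (n : ℕ) (hn : 0 < n) (β ω : ℝ) (hω : 0 < ω)
    (hω' : ω < 1 / Real.sqrt n) :
    ∃ r d s : ℤ,
      1 ≤ r ∧ (r : ℝ) ≤ 1 / (Real.sqrt n * ω) ∧
      |(s : ℝ) + 2 * n * β * d + n * β ^ 2 * r| < Real.sqrt n * ω ∧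
      0 ≤ (n : ℤ) * d ^ 2 - s * r ∧ (n : ℤ) * d ^ 2 - s * r ≤ n := by
  classical
  have hn' : (0:ℝ) < n := by exact_mod_cast hn
  have hn1 : (1:ℝ) ≤ n := by exact_mod_cast hn
  have hsq : 0 < Real.sqrt n := Real.sqrt_pos.2 hn'
  set c : ℝ := Real.sqrt n * ω with hc_def
  have hc : 0 < c := mul_pos hsq hω
  have hc1 : c < 1 := by
    have h := (lt_div_iff₀ hsq).mp hω'
    calc c = ω * Real.sqrt n := by rw [hc_def]; ring
    _ < 1 := by linarith
  set x : ℝ := 1 / c with hx_def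
  have hx0 : 0 < x := by positivity
  have hx1 : 1 < x := by rw [hx_def, lt_div_iff₀ hc]; linarith
  have hxc : x * c = 1 := by rw [hx_def]; field_simp
  -- the box dimensions
  set R : ℤ := ⌊x⌋ with hR_def
  have hR1 : (1:ℤ) ≤ R := by
    rw [hR_def]; exact Int.le_floor.2 (by exact_mod_cast hx1.le)
  have hRx : (R:ℝ) ≤ x := Int.floor_le x
  have hxR : x < (R:ℝ) + 1 := Int.lt_floor_add_one x
  set T : ℝ := (x + ((R:ℝ) + 1)) / 2 with hT_def
  have hxT : x < T := by rw [hT_def]; linarith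
  have hT0 : 0 < T := lt_trans hx0 hxT
  have hTR : T < (R:ℝ) + 1 := by rw [hT_def]; linarith
  set Y : ℝ := (x / T + 1) / 2 with hY_def
  have hxT1 : x / T < 1 := (div_lt_one hT0).2 hxT
  have hxT0 : 0 < x / T := div_pos hx0 hT0
  have hY0 : 0 < Y := by rw [hY_def]; linarith
  have hY1 : Y < 1 := by rw [hY_def]; linarith
  have hTYx : x < T * Y := by
    have e : T * Y = (x + T) / 2 := by rw [hY_def]; field_simp
    rw [e]; linarith
  have hTY0 : 0 < T * Y := mul_pos hT0 hY0
  set M : ℝ := (1 / (T * Y) + c) / 2 with hM_def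
  have hTYc : 1 / (T * Y) < c := by
    have h1 : 1 / (T * Y) < 1 / x := one_div_lt_one_div_of_lt hx0 hTYx
    have h2 : 1 / x = c := by rw [hx_def]; field_simp
    linarith
  have hM0 : 0 < M := by
    have : 0 < 1 / (T * Y) := by positivity
    rw [hM_def]; linarith
  have hMc : M < c := by rw [hM_def]; linarith
  have hTYM : 1 < T * Y * M := by
    have h1 : 1 / (T * Y) < M := by rw [hM_def]; linarith
    calc (1:ℝ) = T * Y * (1 / (T * Y)) := by field_simp
    _ < T * Y * M := by exact mul_lt_mul_of_pos_left h1 hTY0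
  have hxM : x * M < 1 := by
    calc x * M < x * c := mul_lt_mul_of_pos_left hMc hx0
    _ = 1 := hxc
  -- the key finishing lemma
  have key : ∀ r d s : ℤ, 0 < r → (r:ℝ) ≤ T → |β * r + d| ≤ Y →
      |(n:ℝ) * β ^ 2 * r + 2 * n * β * d + s| ≤ M →
      ∃ r d s : ℤ,
        1 ≤ r ∧ (r : ℝ) ≤ x ∧
        |(s : ℝ) + 2 * n * β * d + n * β ^ 2 * r| < c ∧
        0 ≤ (n : ℤ) * d ^ 2 - s * r ∧ (n : ℤ) * d ^ 2 - s * r ≤ n := by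
    intro r d s hr hrT hy hl
    exact ⟨r, d, s, stmt0_aux n β c x T Y M R hn' hc hx0 hxc hRx hTR hY0 hY1
      hMc hxM r d s hr hrT hy hl⟩
  -- set up the geometry of numbers
  let A : Matrix (Fin 3) (Fin 3) ℝ := !![1,0,0; β,1,0; (n:ℝ)*β^2, 2*(n:ℝ)*β, 1]
  have hAdet : A.det = 1 := by simp [A, Matrix.det_fin_three]
  set Φ : (Fin 3 → ℝ) →ₗ[ℝ] (Fin 3 → ℝ) := Matrix.toLin' A with hΦ_def
  have hΦdet : LinearMap.det Φ = 1 := by rw [hΦ_def, LinearMap.det_toLin', hAdet]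
  set w : Fin 3 → ℝ := ![T, Y, M] with hw_def
  set box : Set (Fin 3 → ℝ) := Set.pi Set.univ fun i => Set.Icc (-(w i)) (w i) with hbox_def
  set S : Set (Fin 3 → ℝ) := Φ ⁻¹' box with hS_def
  have hw0 : (w 0 : ℝ) = T := rfl
  have hw1 : (w 1 : ℝ) = Y := rfl
  have hw2 : (w 2 : ℝ) = M := rfl
  have hboxvol : volume box = ENNReal.ofReal ((T - -T) * (Y - -Y) * (M - -M)) := by
    rw [hbox_def, volume_pi_pi, Fin.prod_univ_three, hw0, hw1, hw2,
      Real.volume_Icc, Real.volume_Icc, Real.volume_Icc,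
      ← ENNReal.ofReal_mul (by linarith : (0:ℝ) ≤ T - -T),
      ← ENNReal.ofReal_mul (by nlinarith [hT0, hY0] : (0:ℝ) ≤ (T - -T) * (Y - -Y))]
  have hSvol : volume S = volume box := by
    rw [hS_def, MeasureTheory.Measure.addHaar_preimage_linearMap volume
      (by rw [hΦdet]; norm_num) box, hΦdet]
    norm_num
  have hFvol : volume (ZSpan.fundamentalDomain (Pi.basisFun ℝ (Fin 3))) = 1 := by
    rw [ZSpan.fundamentalDomain_pi_basisFun, volume_pi_pi]
    simp [Real.volume_Ico]
  have hsymm : ∀ z ∈ S, -z ∈ S := by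
    intro z hz
    rw [hS_def, Set.mem_preimage] at hz ⊢
    rw [map_neg]
    rw [hbox_def, Set.mem_univ_pi] at hz ⊢
    intro i
    have h := hz i
    rw [Set.mem_Icc] at h ⊢
    rw [Pi.neg_apply]
    exact ⟨by linarith [h.2], by linarith [h.1]⟩
  have hconv : Convex ℝ S := by
    rw [hS_def]
    exact Convex.linear_preimage (convex_pi fun i _ => convex_Icc _ _) Φ
  have fund := ZSpan.isAddFundamentalDomain' (Pi.basisFun ℝ (Fin 3)) volume
  have : Countable (span ℤ (Set.range (Pi.basisFun ℝ (Fin 3)))).toAddSubgroup := by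
    change Countable (span ℤ (Set.range (Pi.basisFun ℝ (Fin 3))))
    infer_instance
  have hlt : volume (ZSpan.fundamentalDomain (Pi.basisFun ℝ (Fin 3)))
      * 2 ^ finrank ℝ (Fin 3 → ℝ) < volume S := by
    rw [hFvol, hSvol, hboxvol, one_mul, Module.finrank_fin_fun]
    have h8 : ((2:ℝ≥0∞) ^ 3) = ENNReal.ofReal 8 := by
      rw [show ((8:ℝ)) = ((8:ℕ):ℝ) by norm_num, ENNReal.ofReal_natCast]
      norm_num
    rw [h8]
    have e : (T - -T) * (Y - -Y) * (M - -M) = 8 * (T * Y * M) := by ring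
    rw [ENNReal.ofReal_lt_ofReal_iff (by rw [e]; nlinarith [hTY0, hM0]), e]
    nlinarith [hTYM]
  obtain ⟨⟨v, hvmem⟩, h_nz, h_mem⟩ :=
    exists_ne_zero_mem_lattice_of_measure_mul_two_pow_lt_measure fund hsymm hconv hlt
  -- extract integer coordinates
  rw [Submodule.mem_toAddSubgroup, Basis.mem_span_iff_repr_mem] at hvmem
  obtain ⟨r0, hr0⟩ := hvmem 0
  obtain ⟨d0, hd0⟩ := hvmem 1
  obtain ⟨s0, hs0⟩ := hvmem 2
  simp only [Pi.basisFun_repr, algebraMap_int_eq, eq_intCast] at hr0 hd0 hs0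
  -- extract the inequalities
  rw [hS_def, Set.mem_preimage] at h_mem
  have hΦv : Φ v = ![v 0, β * v 0 + v 1, (n:ℝ)*β^2 * v 0 + 2*(n:ℝ)*β * v 1 + v 2] := by
    rw [hΦ_def]
    funext i
    fin_cases i <;>
      simp [A, Matrix.toLin'_apply, Matrix.mulVec, dotProduct, Fin.sum_univ_three] <;>
      ring
  have h0 := h_mem 0 (Set.mem_univ _)
  have h1 := h_mem 1 (Set.mem_univ _)
  have h2 := h_mem 2 (Set.mem_univ _)
  rw [hΦv] at h0 h1 h2
  have g0 : v 0 ∈ Set.Icc (-T) T := h0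
  have g1 : β * v 0 + v 1 ∈ Set.Icc (-Y) Y := h1
  have g2 : (n:ℝ)*β^2 * v 0 + 2*(n:ℝ)*β * v 1 + v 2 ∈ Set.Icc (-M) M := h2
  rw [Set.mem_Icc] at g0 g1 g2
  have habs0 : |v 0| ≤ T := abs_le.2 ⟨g0.1, g0.2⟩
  have habs1 : |β * v 0 + v 1| ≤ Y := abs_le.2 ⟨g1.1, g1.2⟩
  have habs2 : |(n:ℝ)*β^2 * v 0 + 2*(n:ℝ)*β * v 1 + v 2| ≤ M :=
    abs_le.2 ⟨g2.1, g2.2⟩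
  -- v is nonzero
  have hvne : v ≠ 0 := by
    intro hv0
    exact h_nz (Subtype.ext (by simpa using hv0))
  rcases lt_trichotomy r0 0 with hneg | hzero | hpos
  · -- use (-r0, -d0, -s0)
    refine key (-r0) (-d0) (-s0) (by omega) ?_ ?_ ?_
    · have : ((-r0 : ℤ) : ℝ) = -(v 0) := by rw [← hr0]; push_cast; ring
      rw [this]
      have := abs_le.1 habs0
      linarith [this.1]
    · have e : (β * ((-r0:ℤ):ℝ) + ((-d0:ℤ):ℝ)) = -(β * v 0 + v 1) := by
        rw [← hr0, ← hd0]; push_cast; ring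
      rw [e, abs_neg]; exact habs1
    · have e : ((n:ℝ) * β ^ 2 * ((-r0:ℤ):ℝ) + 2 * n * β * ((-d0:ℤ):ℝ) + ((-s0:ℤ):ℝ))
          = -((n:ℝ)*β^2 * v 0 + 2*(n:ℝ)*β * v 1 + v 2) := by
        rw [← hr0, ← hd0, ← hs0]; push_cast; ring
      rw [e, abs_neg]; exact habs2
  · -- contradiction: v = 0
    exfalso
    apply hvne
    have hv0 : v 0 = 0 := by rw [← hr0, hzero]; norm_num
    have hd0' : d0 = 0 := by
      have h : |(d0:ℝ)| ≤ Y := by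
        have e : β * v 0 + v 1 = (d0:ℝ) := by rw [hv0, hd0]; ring
        rw [e] at habs1; exact habs1
      have h1 : |(d0:ℝ)| < 1 := lt_of_le_of_lt h hY1
      have h2 : |d0| < 1 := by exact_mod_cast h1
      rwa [Int.abs_lt_one_iff] at h2
    have hv1 : v 1 = 0 := by rw [← hd0, hd0']; norm_num
    have hs0' : s0 = 0 := by
      have h : |(s0:ℝ)| ≤ M := by
        have e : (n:ℝ)*β^2 * v 0 + 2*(n:ℝ)*β * v 1 + v 2 = (s0:ℝ) := by
          rw [hv0, hv1, hs0]; ring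
        rw [e] at habs2; exact habs2
      have h1 : |(s0:ℝ)| < 1 := lt_of_le_of_lt h (by linarith)
      have h2 : |s0| < 1 := by exact_mod_cast h1
      rwa [Int.abs_lt_one_iff] at h2
    have hv2 : v 2 = 0 := by rw [← hs0, hs0']; norm_num
    funext i
    fin_cases i <;> simpa using by assumption
  · refine key r0 d0 s0 hpos ?_ ?_ ?_
    · rw [hr0]
      exact le_of_abs_le habs0
    · rw [hr0, hd0]; exact habs1
    · rw [hr0, hd0, hs0]; exact habs2
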